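/- Let c be a real n×n matrix. Then min over permutations σ of ∑_i c_{i,σ(i)} equals max over vectors a, b ∈ ℝ^n with a_i + b_j ≤ c_{ij} for all i,j, of ∑_i a_i + ∑_j b_j. -/

import Mathlib

def KMpw {α : Type*} (w : α → α → ℝ) : List α → ℝ
  | [] => 0
  | [_] => 0
  | x :: y :: t => w x y + KMpw w (y :: t)

lemma KMpw_append_cons {α : Type*} (w : α → α → ℝ) (l₁ : List α) (x : α) (l₂ : List α) :
    KMpw w (l₁ ++ x :: l₂) = KMpw w (l₁ ++ [x]) + KMpw w (x :: l₂) := by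
  induction l₁ with
  | nil => simp [KMpw]
  | cons a t ih =>
    cases t with
    | nil =>
      cases l₂ with
      | nil => simp [KMpw]
      | cons b t2 => simp only [List.cons_append, List.nil_append, KMpw]; ring
    | cons b t' =>
      show KMpw w (a :: b :: (t' ++ x :: l₂)) = KMpw w (a :: b :: (t' ++ [x])) + _
      simp only [List.cons_append, KMpw] at ih ⊢
      rw [ih]; ring

lemma KMpw_sum_get {α : Type*} (w : α → α → ℝ) (x : α) (t : List α) :
    KMpw w (x :: t) = ∑ i : Fin t.length,
      w ((x :: t).get ⟨i, by simp only [List.length_cons]; omega⟩)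
        ((x :: t).get ⟨(i : ℕ) + 1, by simp only [List.length_cons]; omega⟩) := by
  induction t generalizing x with
  | nil => simp [KMpw]
  | cons y t' ih =>
    rw [show KMpw w (x :: y :: t') = w x y + KMpw w (y :: t') from rfl, ih y]
    simp only [List.length_cons]
    rw [Fin.sum_univ_succ]
    simp [List.get]

lemma KM_exists_potential {n : ℕ} (c : Matrix (Fin n) (Fin n) ℝ)
    (hmin : ∀ τ : Equiv.Perm (Fin n), ∑ i, c i i ≤ ∑ i, c i (τ i)) :
    ∃ p : Fin n → ℝ, ∀ i j, p j ≤ p i + (c i j - c i i) := by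
  classical
  set w : Fin n → Fin n → ℝ := fun i j => c i j - c i i with hw
  -- cycle non-negativity
  have hcyc : ∀ (x : Fin n) (t : List (Fin n)), (x :: t).Nodup →
      0 ≤ KMpw w (x :: t) + w ((x :: t).getLast (List.cons_ne_nil x t)) x := by
    intro x t hnd
    have h0 : 0 ≤ ∑ i, w i ((x :: t).formPerm i) := by
      have h1 : ∑ i, w i ((x :: t).formPerm i)
          = ∑ i, c i ((x :: t).formPerm i) - ∑ i, c i i := by
        rw [← Finset.sum_sub_distrib]
      have := hmin (x :: t).formPerm
      linarith
    have h2 : ∑ i ∈ (x :: t).toFinset, w i ((x :: t).formPerm i)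
        = ∑ i, w i ((x :: t).formPerm i) :=
      Finset.sum_subset (Finset.subset_univ _)
        (fun y _ hy => by
          rw [List.formPerm_apply_of_notMem (by simpa using hy)]
          simp [hw])
    have h3 : ∑ i ∈ (x :: t).toFinset, w i ((x :: t).formPerm i)
        = KMpw w (x :: t) + w ((x :: t).getLast (List.cons_ne_nil x t)) x := by
      rw [List.sum_toFinset _ hnd,
        ← Fin.sum_univ_fun_getElem (x :: t) (fun y => w y ((x :: t).formPerm y))]
      have hstep : ∀ i : Fin (x :: t).length,
          w ((x :: t)[(i : ℕ)]) ((x :: t).formPerm ((x :: t)[(i : ℕ)]))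
          = w ((x :: t)[(i : ℕ)])
            ((x :: t)[((i : ℕ) + 1) % (x :: t).length]'(Nat.mod_lt _ (by simp))) := by
        intro i
        rw [List.formPerm_apply_getElem _ hnd _ i.2]
      rw [Finset.sum_congr rfl (fun i _ => hstep i)]
      show ∑ i : Fin (t.length + 1), _ = _
      rw [Fin.sum_univ_castSucc]
      congr 1
      · rw [KMpw_sum_get]
        refine Finset.sum_congr rfl (fun i _ => ?_)
        have hmod : ((i : ℕ) + 1) % (t.length + 1) = (i : ℕ) + 1 :=
          Nat.mod_eq_of_lt (by omega)
        simp only [Fin.coe_castSucc, List.get_eq_getElem, List.length_cons, hmod]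
      · have hlast : (x :: t).getLast (List.cons_ne_nil x t)
            = (x :: t)[t.length]'(by simp) := by
          rw [List.getLast_eq_getElem]; congr 1
        simp only [Fin.val_last, hlast, List.length_cons, Nat.mod_self]
        congr 1
    rw [← h2, h3] at h0
    exact h0
  -- potentials: shortest nodup-path weights
  let P : Fin n → Set ℝ := fun k =>
    {s | ∃ l : List (Fin n), l.Nodup ∧ l.getLast? = some k ∧ KMpw w l = s}
  have hPfin : ∀ k, (P k).Finite := by
    intro k
    apply Set.Finite.subset (Set.Finite.image (KMpw w) (List.finite_length_le (Fin n) n))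
    rintro s ⟨l, hnd, -, rfl⟩
    exact ⟨l, hnd.length_le_card.trans (by simp), rfl⟩
  have hPne : ∀ k, (P k).Nonempty := fun k => ⟨KMpw w [k], [k], by simp, by simp, rfl⟩
  have hmem : ∀ k, sInf (P k) ∈ P k := fun k => (hPne k).csInf_mem (hPfin k)
  have hle : ∀ k, ∀ s ∈ P k, sInf (P k) ≤ s := fun k s hs => csInf_le (hPfin k).bddBelow hs
  refine ⟨fun k => sInf (P k), fun i j => ?_⟩
  obtain ⟨l, hnd, hlast, hpw⟩ := hmem i
  have hlne : l ≠ [] := by rintro rfl; simp at hlast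
  have hlasti : l.getLast hlne = i := by
    rw [List.getLast?_eq_getLast hlne] at hlast
    exact Option.some_injective _ hlast
  by_cases hjl : j ∈ l
  · obtain ⟨l₁, l₂, rfl⟩ := List.append_of_mem hjl
    have hsplit : KMpw w (l₁ ++ j :: l₂) = KMpw w (l₁ ++ [j]) + KMpw w (j :: l₂) :=
      KMpw_append_cons w l₁ j l₂
    have hnd2 : (j :: l₂).Nodup := hnd.sublist (List.sublist_append_right l₁ (j :: l₂))
    have hnd1 : (l₁ ++ [j]).Nodup :=
      hnd.sublist (List.Sublist.append_left ((List.nil_sublist l₂).cons₂ j) l₁)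
    have hlast2 : (j :: l₂).getLast (List.cons_ne_nil j l₂) = i := by
      rw [← hlasti]
      exact (List.getLast_append_of_ne_nil _ (List.cons_ne_nil j l₂)).symm
    have hcy := hcyc j l₂ hnd2
    rw [hlast2] at hcy
    have hPj : KMpw w (l₁ ++ [j]) ∈ P j := ⟨l₁ ++ [j], hnd1, by simp, rfl⟩
    have h4 := hle j _ hPj
    simp only [hw]
    rw [← hpw]
    simp only [hw] at hcy
    linarith
  · have hnd2 : (l ++ [j]).Nodup := by
      rw [List.nodup_append]
      exact ⟨hnd, List.nodup_singleton j, by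
        intro a ha b hb hab; rw [List.mem_singleton] at hb; subst hb hab; exact hjl ha⟩
    have hPj : KMpw w (l ++ [j]) ∈ P j := ⟨l ++ [j], hnd2, by simp, rfl⟩
    have hsplit : KMpw w (l ++ [j]) = KMpw w l + w i j := by
      conv_lhs => rw [← List.dropLast_append_getLast hlne, List.append_assoc,
        List.singleton_append, KMpw_append_cons w l.dropLast (l.getLast hlne) [j],
        List.dropLast_append_getLast hlne]
      rw [hlasti]
      show KMpw w l + (w i j + KMpw w [j]) = _
      simp [KMpw]
    have h4 := hle j _ hPj
    rw [hsplit, hpw] at h4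
    simp only [hw] at h4 ⊢
    linarith

/-- **Kuhn–Munkres duality, minimization form.** For a real `n × n` matrix `c`, the
minimal sum of a transversal equals the maximal sum `∑ a i + ∑ b j` over vectors
`a, b` with `a i + b j ≤ c i j` for all `i, j`. -/
theorem kuhn_munkres_min {n : ℕ} (c : Matrix (Fin n) (Fin n) ℝ) :
    ∃ m : ℝ,
      IsLeast {s : ℝ | ∃ σ : Equiv.Perm (Fin n), s = ∑ i, c i (σ i)} m ∧
      IsGreatest {s : ℝ | ∃ a b : Fin n → ℝ, (∀ i j, a i + b j ≤ c i j) ∧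
        s = (∑ i, a i) + ∑ j, b j} m := by
  classical
  set F : Finset ℝ := Finset.univ.image (fun σ : Equiv.Perm (Fin n) => ∑ i, c i (σ i)) with hF
  have hFne : F.Nonempty := ⟨∑ i, c i i, by simp [hF]; exact ⟨Equiv.refl _, by simp⟩⟩
  set m := F.min' hFne with hm
  obtain ⟨σ₀, -, hσ₀⟩ := Finset.mem_image.mp (F.min'_mem hFne)
  have hlb : ∀ σ : Equiv.Perm (Fin n), m ≤ ∑ i, c i (σ i) := fun σ =>
    F.min'_le _ (Finset.mem_image.mpr ⟨σ, Finset.mem_univ _, rfl⟩)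
  -- reduced matrix
  set c' : Matrix (Fin n) (Fin n) ℝ := fun i j => c i (σ₀ j) with hc'
  have hmin' : ∀ τ : Equiv.Perm (Fin n), ∑ i, c' i i ≤ ∑ i, c' i (τ i) := by
    intro τ
    have h1 : ∑ i, c' i (τ i) = ∑ i, c i ((τ.trans σ₀) i) := rfl
    rw [h1, hc']
    simp only [hσ₀]
    exact hlb _
  obtain ⟨p, hp⟩ := KM_exists_potential c' hmin'
  set a : Fin n → ℝ := fun i => c i (σ₀ i) - p i with ha
  set b : Fin n → ℝ := fun j => p (σ₀.symm j) with hb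
  have hfeas : ∀ i j, a i + b j ≤ c i j := by
    intro i j
    have := hp i (σ₀.symm j)
    simp only [hc', Equiv.apply_symm_apply] at this
    simp only [ha, hb]
    linarith
  have hsum : (∑ i, a i) + ∑ j, b j = m := by
    have h1 : ∑ j, b j = ∑ j, p j := Equiv.sum_comp σ₀.symm p
    rw [h1, ha]
    simp only [Finset.sum_sub_distrib]
    rw [hσ₀]
    ring
  refine ⟨m, ⟨⟨σ₀, hσ₀.symm⟩, ?_⟩, ⟨⟨a, b, hfeas, hsum.symm⟩, ?_⟩⟩
  · rintro s ⟨σ, rfl⟩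
    exact hlb σ
  · rintro s ⟨a', b', hfeas', rfl⟩
    have h1 : ∑ j, b' j = ∑ i, b' (σ₀ i) := (Equiv.sum_comp σ₀ b').symm
    calc (∑ i, a' i) + ∑ j, b' j = ∑ i, (a' i + b' (σ₀ i)) := by
          rw [h1, Finset.sum_add_distrib]
      _ ≤ ∑ i, c i (σ₀ i) := Finset.sum_le_sum (fun i _ => hfeas' i (σ₀ i))
      _ = m := hσ₀
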